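/- Fix an integer n ≥ 4. A homogeneous polynomial P ∈ R of degree 2 satisfies φ_σ(P) = P for all σ ∈ Sₙ if and only if P is a ℤ-linear combination of the four polynomials: s₁ = Σᵢ ((aᵢ⁺)² + (aᵢ⁻)²), s₂ = Σᵢ aᵢ⁺aᵢ⁻, s₃ = Σ_{i<j} (aᵢ⁺aⱼ⁺ + aᵢ⁻aⱼ⁻), and s₄ = Σ_{i<j} (aᵢ⁺aⱼ⁻ + aᵢ⁻aⱼ⁺). -/

import Mathlib

set_option synthInstance.maxHeartbeats 1000000
set_option maxHeartbeats 1000000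

open MvPolynomial

/-- The signed permutation of the `2n` variables `aᵢ⁺ = (i, true)`, `aᵢ⁻ = (i, false)`
associated to `σ ∈ Sₙ`: it sends `aᵢ^ε` to `a_{σ(i)}^{ε·sgn σ}`. -/
def signedVar {n : ℕ} (σ : Equiv.Perm (Fin n)) (p : Fin n × Bool) : Fin n × Bool :=
  (σ p.1, if Equiv.Perm.sign σ = 1 then p.2 else !p.2)

/-- The ring automorphism `φ_σ` of `R = ℤ[a₁⁺, a₁⁻, …, aₙ⁺, aₙ⁻]` induced by the signed
permutation action of `σ ∈ Sₙ` on the variables. -/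
noncomputable def phi {n : ℕ} (σ : Equiv.Perm (Fin n)) :
    MvPolynomial (Fin n × Bool) ℤ →ₐ[ℤ] MvPolynomial (Fin n × Bool) ℤ :=
  MvPolynomial.rename (signedVar σ)






lemma signedVar_injective {n : ℕ} (σ : Equiv.Perm (Fin n)) :
    Function.Injective (signedVar σ) := by
  intro p q h
  simp only [signedVar, Prod.mk.injEq] at h
  obtain ⟨h1, h2⟩ := h
  have : p.1 = q.1 := σ.injective h1
  split_ifs at h2
  · exact Prod.ext this h2
  · exact Prod.ext this (Bool.not_inj h2)

-- degree lemmas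
lemma deg_add {τ : Type*} (a b : τ →₀ ℕ) : (a + b).degree = a.degree + b.degree := by
  simp only [Finsupp.degree_eq_weight_one, map_add]

lemma deg_single {τ : Type*} (u : τ) (k : ℕ) : (Finsupp.single u k).degree = k := by
  simp only [Finsupp.degree_eq_weight_one]
  rw [Finsupp.weight_apply, Finsupp.sum_single_index] <;> simp

lemma exists_single_of_deg_one {τ : Type*} [DecidableEq τ] (d : τ →₀ ℕ) (h : d.degree = 1) :
    ∃ u, d = Finsupp.single u 1 := by
  have hd : d ≠ 0 := by
    intro h0; rw [h0] at h; simp at h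
  obtain ⟨u, hu⟩ := Finsupp.ne_iff.mp hd
  simp only [Finsupp.coe_zero, Pi.zero_apply] at hu
  refine ⟨u, ?_⟩
  have hle : d u ≤ 1 := h ▸ Finsupp.le_degree u d
  have hdu : d u = 1 := by omega
  have hd' : d = Finsupp.single u 1 + (d - Finsupp.single u 1) := by
    ext a
    by_cases ha : u = a <;>
      simp [Finsupp.single_apply, Finsupp.tsub_apply, ha, hdu] <;>
      first | omega | (subst ha; omega)
  have : (d - Finsupp.single u 1).degree = 0 := by
    have := deg_add (Finsupp.single u 1) (d - Finsupp.single u 1)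
    rw [← hd', h, deg_single] at this
    omega
  rw [Finsupp.degree_eq_zero_iff] at this
  rw [hd', this, add_zero]

lemma exists_pair_of_deg_two {τ : Type*} [DecidableEq τ] (d : τ →₀ ℕ) (h : d.degree = 2) :
    ∃ u v, d = Finsupp.single u 1 + Finsupp.single v 1 := by
  have hd : d ≠ 0 := by
    intro h0; rw [h0] at h; simp at h
  obtain ⟨u, hu⟩ := Finsupp.ne_iff.mp hd
  simp only [Finsupp.coe_zero, Pi.zero_apply] at hu
  have hdu : 1 ≤ d u := Nat.one_le_iff_ne_zero.mpr hu
  have hd' : d = Finsupp.single u 1 + (d - Finsupp.single u 1) := by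
    ext a
    by_cases ha : u = a <;>
      simp [Finsupp.single_apply, Finsupp.tsub_apply, ha] <;>
      first | omega | (subst ha; omega)
  have hdeg : (d - Finsupp.single u 1).degree = 1 := by
    have := deg_add (Finsupp.single u 1) (d - Finsupp.single u 1)
    rw [← hd', h, deg_single] at this
    omega
  obtain ⟨v, hv⟩ := exists_single_of_deg_one _ hdeg
  exact ⟨u, v, by rw [hd', hv]⟩

lemma exists_two_avoid {n : ℕ} (hn : 4 ≤ n) (a b : Fin n) :
    ∃ c d : Fin n, c ≠ d ∧ c ≠ a ∧ c ≠ b ∧ d ≠ a ∧ d ≠ b := by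
  classical
  have hcard : 2 ≤ (Finset.univ \ {a, b} : Finset (Fin n)).card := by
    have h1 : ({a, b} : Finset (Fin n)).card ≤ 2 := Finset.card_insert_le _ _ |>.trans (by simp)
    have := Finset.card_sdiff_add_card_eq_card (Finset.subset_univ ({a, b} : Finset (Fin n)))
    simp only [Finset.card_univ, Fintype.card_fin] at this
    omega
  obtain ⟨c, hc, d, hd, hcd⟩ :=
    Finset.one_lt_card.mp (show 1 < (Finset.univ \ {a, b} : Finset (Fin n)).card by omega)
  simp only [Finset.mem_sdiff, Finset.mem_insert, Finset.mem_singleton, not_or] at hc hd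
  exact ⟨c, d, hcd, hc.2.1, hc.2.2, hd.2.1, hd.2.2⟩

lemma exists_perm_one {n : ℕ} (hn : 4 ≤ n) (a i : Fin n) (s : ℤˣ) :
    ∃ σ : Equiv.Perm (Fin n), σ a = i ∧ Equiv.Perm.sign σ = s := by
  obtain ⟨c, d, hcd, hca, _, hda, _⟩ := exists_two_avoid hn a a
  by_cases hs : Equiv.Perm.sign (Equiv.swap a i) = s
  · exact ⟨Equiv.swap a i, Equiv.swap_apply_left a i, hs⟩
  · refine ⟨Equiv.swap a i * Equiv.swap c d, ?_, ?_⟩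
    · simp [Equiv.swap_apply_of_ne_of_ne (Ne.symm hca) (Ne.symm hda),
        Equiv.swap_apply_left]
    · rw [map_mul, Equiv.Perm.sign_swap hcd]
      rcases Int.units_eq_one_or (Equiv.Perm.sign (Equiv.swap a i)) with h | h <;>
        rcases Int.units_eq_one_or s with h' | h' <;>
          simp_all

lemma exists_perm_two {n : ℕ} (hn : 4 ≤ n) {a b i j : Fin n} (hab : a ≠ b) (hij : i ≠ j)
    (s : ℤˣ) : ∃ σ : Equiv.Perm (Fin n), σ a = i ∧ σ b = j ∧ Equiv.Perm.sign σ = s := by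
  obtain ⟨c, d, hcd, hca, hcb, hda, hdb⟩ := exists_two_avoid hn a b
  set k : Fin n := Equiv.swap a i j with hk
  have hka : k ≠ a := by
    simp only [hk]
    intro h
    have hji : j = i :=
      (Equiv.swap a i).injective (h.trans (Equiv.swap_apply_right a i).symm)
    exact hij hji.symm
  set σ₀ : Equiv.Perm (Fin n) := Equiv.swap a i * Equiv.swap b k with hσ₀
  have h1 : σ₀ a = i := by
    simp [hσ₀, Equiv.swap_apply_of_ne_of_ne hab (Ne.symm hka), Equiv.swap_apply_left]
  have h2 : σ₀ b = j := by
    simp [hσ₀, Equiv.swap_apply_left, hk]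
  by_cases hs : Equiv.Perm.sign σ₀ = s
  · exact ⟨σ₀, h1, h2, hs⟩
  · refine ⟨σ₀ * Equiv.swap c d, ?_, ?_, ?_⟩
    · simp only [Equiv.Perm.mul_apply,
        Equiv.swap_apply_of_ne_of_ne (Ne.symm hca) (Ne.symm hda)]
      exact h1
    · simp only [Equiv.Perm.mul_apply,
        Equiv.swap_apply_of_ne_of_ne (Ne.symm hcb) (Ne.symm hdb)]
      exact h2
    · rw [map_mul, Equiv.Perm.sign_swap hcd]
      rcases Int.units_eq_one_or (Equiv.Perm.sign σ₀) with h | h <;>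
        rcases Int.units_eq_one_or s with h' | h' <;>
          simp_all

lemma sum_Ioi_perm {n : ℕ} {M : Type*} [AddCommMonoid M] (g : Fin n → Fin n → M)
    (hg : ∀ i j, g i j = g j i) (σ : Equiv.Perm (Fin n)) :
    ∑ i : Fin n, ∑ j ∈ Finset.Ioi i, g (σ i) (σ j)
      = ∑ i : Fin n, ∑ j ∈ Finset.Ioi i, g i j := by
  rw [Finset.sum_sigma', Finset.sum_sigma']
  refine Finset.sum_nbij'
    (fun x => if σ x.1 < σ x.2 then ⟨σ x.1, σ x.2⟩ else ⟨σ x.2, σ x.1⟩)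
    (fun y => if σ⁻¹ y.1 < σ⁻¹ y.2 then ⟨σ⁻¹ y.1, σ⁻¹ y.2⟩ else ⟨σ⁻¹ y.2, σ⁻¹ y.1⟩)
    ?_ ?_ ?_ ?_ ?_
  · rintro ⟨x1, x2⟩ hx
    simp only [Finset.mem_sigma, Finset.mem_univ, Finset.mem_Ioi, true_and] at hx ⊢
    split_ifs with h
    · exact h
    · rcases lt_or_eq_of_le (not_lt.mp h) with h' | h'
      · exact h'
      · exact absurd (σ.injective h') (ne_of_gt hx)
  · rintro ⟨y1, y2⟩ hy
    simp only [Finset.mem_sigma, Finset.mem_univ, Finset.mem_Ioi, true_and] at hy ⊢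
    split_ifs with h
    · exact h
    · rcases lt_or_eq_of_le (not_lt.mp h) with h' | h'
      · exact h'
      · exact absurd (σ⁻¹.injective h') (ne_of_gt hy)
  · rintro ⟨x1, x2⟩ hx
    simp only [Finset.mem_sigma, Finset.mem_univ, Finset.mem_Ioi, true_and] at hx
    dsimp only
    split_ifs <;> simp_all [Equiv.Perm.inv_def]
    exact absurd (by assumption : x2 < x1) (asymm hx)
  · rintro ⟨y1, y2⟩ hy
    simp only [Finset.mem_sigma, Finset.mem_univ, Finset.mem_Ioi, true_and] at hy
    dsimp only
    split_ifs <;> simp_all [Equiv.Perm.inv_def]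
    exact absurd (by assumption : y2 < y1) (asymm hy)
  · rintro ⟨x1, x2⟩ hx
    dsimp only
    split_ifs with h
    · rfl
    · exact hg _ _

noncomputable def S1 (n : ℕ) : MvPolynomial (Fin n × Bool) ℤ :=
  ∑ i : Fin n, (X (i, true) ^ 2 + X (i, false) ^ 2)
noncomputable def S2 (n : ℕ) : MvPolynomial (Fin n × Bool) ℤ :=
  ∑ i : Fin n, X (i, true) * X (i, false)
noncomputable def S3 (n : ℕ) : MvPolynomial (Fin n × Bool) ℤ :=
  ∑ i : Fin n, ∑ j ∈ Finset.Ioi i, (X (i, true) * X (j, true) + X (i, false) * X (j, false))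
noncomputable def S4 (n : ℕ) : MvPolynomial (Fin n × Bool) ℤ :=
  ∑ i : Fin n, ∑ j ∈ Finset.Ioi i, (X (i, true) * X (j, false) + X (i, false) * X (j, true))

lemma signedVar_apply {n : ℕ} (σ : Equiv.Perm (Fin n)) (i : Fin n) (b : Bool) :
    signedVar σ (i, b) = (σ i, if Equiv.Perm.sign σ = 1 then b else !b) := rfl

lemma phi_S1 {n : ℕ} (σ : Equiv.Perm (Fin n)) : phi σ (S1 n) = S1 n := by
  rw [S1, phi]
  simp only [map_sum, map_add, map_pow, rename_X, signedVar_apply]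
  rw [← Equiv.sum_comp σ (fun i => (X (i, true) ^ 2 + X (i, false) ^ 2 :
    MvPolynomial (Fin n × Bool) ℤ))]
  split_ifs <;> simp [add_comm]

lemma phi_S2 {n : ℕ} (σ : Equiv.Perm (Fin n)) : phi σ (S2 n) = S2 n := by
  rw [S2, phi]
  simp only [map_sum, map_mul, rename_X, signedVar_apply]
  rw [← Equiv.sum_comp σ (fun i => (X (i, true) * X (i, false) :
    MvPolynomial (Fin n × Bool) ℤ))]
  split_ifs <;> simp [mul_comm]

lemma phi_S3 {n : ℕ} (σ : Equiv.Perm (Fin n)) : phi σ (S3 n) = S3 n := by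
  rw [S3, phi]
  simp only [map_sum, map_add, map_mul, rename_X, signedVar_apply]
  rw [show ∑ i : Fin n, ∑ j ∈ Finset.Ioi i,
      ((X (σ i, if Equiv.Perm.sign σ = 1 then true else !true) *
        X (σ j, if Equiv.Perm.sign σ = 1 then true else !true) : MvPolynomial (Fin n × Bool) ℤ) +
       X (σ i, if Equiv.Perm.sign σ = 1 then false else !false) *
        X (σ j, if Equiv.Perm.sign σ = 1 then false else !false))
      = ∑ i : Fin n, ∑ j ∈ Finset.Ioi i,
        ((X (σ i, true) * X (σ j, true) : MvPolynomial (Fin n × Bool) ℤ) +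
          X (σ i, false) * X (σ j, false)) from by split_ifs <;> simp [add_comm]]
  exact sum_Ioi_perm (fun a b => (X (a, true) * X (b, true) + X (a, false) * X (b, false)))
    (fun a b => by ring) σ

lemma phi_S4 {n : ℕ} (σ : Equiv.Perm (Fin n)) : phi σ (S4 n) = S4 n := by
  rw [S4, phi]
  simp only [map_sum, map_add, map_mul, rename_X, signedVar_apply]
  rw [show ∑ i : Fin n, ∑ j ∈ Finset.Ioi i,
      ((X (σ i, if Equiv.Perm.sign σ = 1 then true else !true) *
        X (σ j, if Equiv.Perm.sign σ = 1 then false else !false) : MvPolynomial (Fin n × Bool) ℤ) +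
       X (σ i, if Equiv.Perm.sign σ = 1 then false else !false) *
        X (σ j, if Equiv.Perm.sign σ = 1 then true else !true))
      = ∑ i : Fin n, ∑ j ∈ Finset.Ioi i,
        ((X (σ i, true) * X (σ j, false) : MvPolynomial (Fin n × Bool) ℤ) +
          X (σ i, false) * X (σ j, true)) from by split_ifs <;> simp [add_comm]]
  exact sum_Ioi_perm (fun a b => (X (a, true) * X (b, false) + X (a, false) * X (b, true)))
    (fun a b => by ring) σ

lemma S1_hom (n : ℕ) : (S1 n).IsHomogeneous 2 :=
  IsHomogeneous.sum _ _ _ fun i _ =>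
    ((isHomogeneous_X _ _).pow 2).add ((isHomogeneous_X _ _).pow 2)
lemma S2_hom (n : ℕ) : (S2 n).IsHomogeneous 2 :=
  IsHomogeneous.sum _ _ _ fun i _ => (isHomogeneous_X _ _).mul (isHomogeneous_X _ _)
lemma S3_hom (n : ℕ) : (S3 n).IsHomogeneous 2 :=
  IsHomogeneous.sum _ _ _ fun i _ => IsHomogeneous.sum _ _ _ fun j _ =>
    ((isHomogeneous_X _ _).mul (isHomogeneous_X _ _)).add
      ((isHomogeneous_X _ _).mul (isHomogeneous_X _ _))
lemma S4_hom (n : ℕ) : (S4 n).IsHomogeneous 2 :=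
  IsHomogeneous.sum _ _ _ fun i _ => IsHomogeneous.sum _ _ _ fun j _ =>
    ((isHomogeneous_X _ _).mul (isHomogeneous_X _ _)).add
      ((isHomogeneous_X _ _).mul (isHomogeneous_X _ _))

lemma coeff_XX {τ : Type*} [DecidableEq τ] (u v : τ) (d : τ →₀ ℕ) :
    coeff d (X u * X v : MvPolynomial τ ℤ) =
      if Finsupp.single u 1 + Finsupp.single v 1 = d then 1 else 0 := by
  rw [X, X, monomial_mul, one_mul, coeff_monomial]

lemma coeff_Xsq {τ : Type*} [DecidableEq τ] (u : τ) (d : τ →₀ ℕ) :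
    coeff d (X u ^ 2 : MvPolynomial τ ℤ) =
      if Finsupp.single u 2 = d then 1 else 0 := by
  rw [X_pow_eq_monomial, coeff_monomial]

lemma pair_eq_pair_iff {τ : Type*} [DecidableEq τ] {u v u' v' : τ} (huv : u ≠ v)
    (huv' : u' ≠ v') :
    Finsupp.single u 1 + Finsupp.single v 1 = Finsupp.single u' 1 + Finsupp.single v' 1 ↔
      (u = u' ∧ v = v') ∨ (u = v' ∧ v = u') := by
  constructor
  · intro h
    by_cases h1 : u' = u
    · subst h1
      have := add_left_cancel h
      exact Or.inl ⟨rfl, ((Finsupp.single_left_inj one_ne_zero).mp this)⟩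
    · by_cases h2 : v' = u
      · refine Or.inr ⟨h2.symm, ?_⟩
        rw [h2, add_comm (Finsupp.single u' 1) (Finsupp.single u 1)] at h
        exact (Finsupp.single_left_inj one_ne_zero).mp (add_left_cancel h)
      · exfalso
        have happ := DFunLike.congr_fun h u
        simp [Finsupp.single_apply, Ne.symm huv, h1, h2] at happ
  · rintro (⟨rfl, rfl⟩ | ⟨rfl, rfl⟩)
    · rfl
    · exact add_comm _ _

lemma pair_ne_sq {τ : Type*} [DecidableEq τ] {u v w : τ} (huv : u ≠ v) :
    Finsupp.single u 1 + Finsupp.single v 1 ≠ Finsupp.single w 2 := by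
  intro h
  have happ := DFunLike.congr_fun h u
  simp only [Finsupp.add_apply, Finsupp.single_apply, if_pos rfl] at happ
  rw [if_neg (Ne.symm huv)] at happ
  split_ifs at happ <;> omega

lemma sq_eq_sq_iff {τ : Type*} [DecidableEq τ] {u v : τ} :
    Finsupp.single u (2 : ℕ) = Finsupp.single v 2 ↔ u = v :=
  Finsupp.single_left_inj (by norm_num)

section coeffs
variable {n : ℕ} (a b : Fin n)

lemma cS1E1 : coeff (Finsupp.single ((a, true) : Fin n × Bool) 2) (S1 n) = 1 := by
  simp [S1, coeff_sum, coeff_Xsq, sq_eq_sq_iff, Prod.mk.injEq]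

lemma cS2E1 : coeff (Finsupp.single ((a, true) : Fin n × Bool) 2) (S2 n) = 0 := by
  rw [S2, coeff_sum]
  exact Finset.sum_eq_zero fun i _ => by
    rw [coeff_XX, if_neg (pair_ne_sq (by simp))]

lemma cS3E1 : coeff (Finsupp.single ((a, true) : Fin n × Bool) 2) (S3 n) = 0 := by
  rw [S3, coeff_sum]
  refine Finset.sum_eq_zero fun i _ => ?_
  rw [coeff_sum]
  refine Finset.sum_eq_zero fun j hj => ?_
  rw [Finset.mem_Ioi] at hj
  rw [coeff_add, coeff_XX, coeff_XX,
    if_neg (pair_ne_sq (by simp [hj.ne])), if_neg (pair_ne_sq (by simp [hj.ne])), add_zero]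

lemma cS4E1 : coeff (Finsupp.single ((a, true) : Fin n × Bool) 2) (S4 n) = 0 := by
  rw [S4, coeff_sum]
  refine Finset.sum_eq_zero fun i _ => ?_
  rw [coeff_sum]
  refine Finset.sum_eq_zero fun j hj => ?_
  rw [coeff_add, coeff_XX, coeff_XX,
    if_neg (pair_ne_sq (by simp)), if_neg (pair_ne_sq (by simp)), add_zero]

lemma cS1E2 : coeff (Finsupp.single ((a, true) : Fin n × Bool) 1
    + Finsupp.single ((a, false) : Fin n × Bool) 1) (S1 n) = 0 := by
  rw [S1, coeff_sum]
  refine Finset.sum_eq_zero fun i _ => ?_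
  rw [coeff_add, coeff_Xsq, coeff_Xsq,
    if_neg (Ne.symm (pair_ne_sq (by simp))), if_neg (Ne.symm (pair_ne_sq (by simp))), add_zero]

lemma cS2E2 : coeff (Finsupp.single ((a, true) : Fin n × Bool) 1
    + Finsupp.single ((a, false) : Fin n × Bool) 1) (S2 n) = 1 := by
  rw [S2, coeff_sum]
  have step : ∀ i : Fin n, coeff (Finsupp.single ((a, true) : Fin n × Bool) 1
      + Finsupp.single ((a, false) : Fin n × Bool) 1)
      (X (i, true) * X (i, false) : MvPolynomial (Fin n × Bool) ℤ)
      = if i = a then 1 else 0 := by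
    intro i
    rw [coeff_XX]
    refine if_congr ?_ rfl rfl
    rw [pair_eq_pair_iff (by simp) (by simp)]
    simp [Prod.mk.injEq, and_comm]
  rw [Finset.sum_congr rfl fun i _ => step i]
  simp

lemma cS3E2 : coeff (Finsupp.single ((a, true) : Fin n × Bool) 1
    + Finsupp.single ((a, false) : Fin n × Bool) 1) (S3 n) = 0 := by
  rw [S3, coeff_sum]
  refine Finset.sum_eq_zero fun i _ => ?_
  rw [coeff_sum]
  refine Finset.sum_eq_zero fun j hj => ?_
  rw [Finset.mem_Ioi] at hj
  rw [coeff_add, coeff_XX, coeff_XX, if_neg ?c1, if_neg ?c2, add_zero]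
  case c1 =>
    rw [pair_eq_pair_iff (by simp [hj.ne]) (by simp)]
    rintro (⟨h1, h2⟩ | ⟨h1, h2⟩) <;> simp_all
  case c2 =>
    rw [pair_eq_pair_iff (by simp [hj.ne]) (by simp)]
    rintro (⟨h1, h2⟩ | ⟨h1, h2⟩) <;> simp_all

lemma cS4E2 : coeff (Finsupp.single ((a, true) : Fin n × Bool) 1
    + Finsupp.single ((a, false) : Fin n × Bool) 1) (S4 n) = 0 := by
  rw [S4, coeff_sum]
  refine Finset.sum_eq_zero fun i _ => ?_
  rw [coeff_sum]
  refine Finset.sum_eq_zero fun j hj => ?_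
  rw [Finset.mem_Ioi] at hj
  rw [coeff_add, coeff_XX, coeff_XX, if_neg ?c1, if_neg ?c2, add_zero]
  case c1 =>
    rw [pair_eq_pair_iff (by simp) (by simp)]
    rintro (⟨h1, h2⟩ | ⟨h1, h2⟩) <;> simp_all [Prod.mk.injEq]
  case c2 =>
    rw [pair_eq_pair_iff (by simp) (by simp)]
    rintro (⟨h1, h2⟩ | ⟨h1, h2⟩) <;> simp_all [Prod.mk.injEq]

variable (hab : a < b)
include hab

lemma cS1E3 : coeff (Finsupp.single ((a, true) : Fin n × Bool) 1
    + Finsupp.single ((b, true) : Fin n × Bool) 1) (S1 n) = 0 := by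
  rw [S1, coeff_sum]
  refine Finset.sum_eq_zero fun i _ => ?_
  rw [coeff_add, coeff_Xsq, coeff_Xsq,
    if_neg (Ne.symm (pair_ne_sq (by simp [hab.ne]))),
    if_neg (Ne.symm (pair_ne_sq (by simp [hab.ne]))), add_zero]

lemma cS2E3 : coeff (Finsupp.single ((a, true) : Fin n × Bool) 1
    + Finsupp.single ((b, true) : Fin n × Bool) 1) (S2 n) = 0 := by
  rw [S2, coeff_sum]
  refine Finset.sum_eq_zero fun i _ => ?_
  rw [coeff_XX, if_neg ?c1]
  case c1 =>
    rw [pair_eq_pair_iff (by simp) (by simp [hab.ne])]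
    rintro (⟨h1, h2⟩ | ⟨h1, h2⟩) <;> simp_all

lemma cS3E3 : coeff (Finsupp.single ((a, true) : Fin n × Bool) 1
    + Finsupp.single ((b, true) : Fin n × Bool) 1) (S3 n) = 1 := by
  rw [S3, coeff_sum]
  have step : ∀ i : Fin n, coeff (Finsupp.single ((a, true) : Fin n × Bool) 1
      + Finsupp.single ((b, true) : Fin n × Bool) 1)
      (∑ j ∈ Finset.Ioi i, (X (i, true) * X (j, true)
        + X (i, false) * X (j, false) : MvPolynomial (Fin n × Bool) ℤ))
      = if i = a then 1 else 0 := by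
    intro i
    rw [coeff_sum]
    by_cases hia : i = a
    · subst hia
      rw [if_pos rfl, Finset.sum_eq_single b ?h1 ?h2]
      · rw [coeff_add, coeff_XX, coeff_XX, if_pos rfl, if_neg ?c0, add_zero]
        case c0 =>
          rw [pair_eq_pair_iff (by simp [hab.ne]) (by simp [hab.ne])]
          rintro (⟨h1, h2⟩ | ⟨h1, h2⟩) <;> simp_all
      case h1 =>
        intro j hj hjb
        rw [Finset.mem_Ioi] at hj
        rw [coeff_add, coeff_XX, coeff_XX, if_neg ?c1, if_neg ?c2, add_zero]
        case c1 =>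
          rw [pair_eq_pair_iff (by simp [hj.ne]) (by simp [hab.ne])]
          rintro (⟨h1, h2⟩ | ⟨h1, h2⟩) <;> simp_all
        case c2 =>
          rw [pair_eq_pair_iff (by simp [hj.ne]) (by simp [hab.ne])]
          rintro (⟨h1, h2⟩ | ⟨h1, h2⟩) <;> simp_all
      case h2 =>
        intro hb
        exact absurd (Finset.mem_Ioi.mpr hab) hb
    · rw [if_neg hia]
      refine Finset.sum_eq_zero fun j hj => ?_
      rw [Finset.mem_Ioi] at hj
      rw [coeff_add, coeff_XX, coeff_XX, if_neg ?c1, if_neg ?c2, add_zero]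
      case c1 =>
        rw [pair_eq_pair_iff (by simp [hj.ne]) (by simp [hab.ne])]
        rintro (⟨h1, h2⟩ | ⟨h1, h2⟩) <;> simp_all [Prod.mk.injEq]
        exact absurd (hj.trans hab) (by simp_all [asymm])
      case c2 =>
        rw [pair_eq_pair_iff (by simp [hj.ne]) (by simp [hab.ne])]
        rintro (⟨h1, h2⟩ | ⟨h1, h2⟩) <;> simp_all
  rw [Finset.sum_congr rfl fun i _ => step i]
  simp

lemma cS4E3 : coeff (Finsupp.single ((a, true) : Fin n × Bool) 1
    + Finsupp.single ((b, true) : Fin n × Bool) 1) (S4 n) = 0 := by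
  rw [S4, coeff_sum]
  refine Finset.sum_eq_zero fun i _ => ?_
  rw [coeff_sum]
  refine Finset.sum_eq_zero fun j hj => ?_
  rw [coeff_add, coeff_XX, coeff_XX, if_neg ?c1, if_neg ?c2, add_zero]
  case c1 =>
    rw [pair_eq_pair_iff (by simp) (by simp [hab.ne])]
    rintro (⟨h1, h2⟩ | ⟨h1, h2⟩) <;> simp_all
  case c2 =>
    rw [pair_eq_pair_iff (by simp) (by simp [hab.ne])]
    rintro (⟨h1, h2⟩ | ⟨h1, h2⟩) <;> simp_all

lemma cS1E4 : coeff (Finsupp.single ((a, true) : Fin n × Bool) 1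
    + Finsupp.single ((b, false) : Fin n × Bool) 1) (S1 n) = 0 := by
  rw [S1, coeff_sum]
  refine Finset.sum_eq_zero fun i _ => ?_
  rw [coeff_add, coeff_Xsq, coeff_Xsq,
    if_neg (Ne.symm (pair_ne_sq (by simp))), if_neg (Ne.symm (pair_ne_sq (by simp))), add_zero]

lemma cS2E4 : coeff (Finsupp.single ((a, true) : Fin n × Bool) 1
    + Finsupp.single ((b, false) : Fin n × Bool) 1) (S2 n) = 0 := by
  rw [S2, coeff_sum]
  refine Finset.sum_eq_zero fun i _ => ?_
  rw [coeff_XX, if_neg ?c1]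
  case c1 =>
    rw [pair_eq_pair_iff (by simp) (by simp)]
    rintro (⟨h1, h2⟩ | ⟨h1, h2⟩) <;> simp_all [Prod.mk.injEq]

lemma cS3E4 : coeff (Finsupp.single ((a, true) : Fin n × Bool) 1
    + Finsupp.single ((b, false) : Fin n × Bool) 1) (S3 n) = 0 := by
  rw [S3, coeff_sum]
  refine Finset.sum_eq_zero fun i _ => ?_
  rw [coeff_sum]
  refine Finset.sum_eq_zero fun j hj => ?_
  rw [Finset.mem_Ioi] at hj
  rw [coeff_add, coeff_XX, coeff_XX, if_neg ?c1, if_neg ?c2, add_zero]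
  case c1 =>
    rw [pair_eq_pair_iff (by simp [hj.ne]) (by simp)]
    rintro (⟨h1, h2⟩ | ⟨h1, h2⟩) <;> simp_all
  case c2 =>
    rw [pair_eq_pair_iff (by simp [hj.ne]) (by simp)]
    rintro (⟨h1, h2⟩ | ⟨h1, h2⟩) <;> simp_all

lemma cS4E4 : coeff (Finsupp.single ((a, true) : Fin n × Bool) 1
    + Finsupp.single ((b, false) : Fin n × Bool) 1) (S4 n) = 1 := by
  rw [S4, coeff_sum]
  have step : ∀ i : Fin n, coeff (Finsupp.single ((a, true) : Fin n × Bool) 1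
      + Finsupp.single ((b, false) : Fin n × Bool) 1)
      (∑ j ∈ Finset.Ioi i, (X (i, true) * X (j, false)
        + X (i, false) * X (j, true) : MvPolynomial (Fin n × Bool) ℤ))
      = if i = a then 1 else 0 := by
    intro i
    rw [coeff_sum]
    by_cases hia : i = a
    · subst hia
      rw [if_pos rfl, Finset.sum_eq_single b ?h1 ?h2]
      · rw [coeff_add, coeff_XX, coeff_XX, if_pos rfl, if_neg ?c0, add_zero]
        case c0 =>
          rw [pair_eq_pair_iff (by simp) (by simp)]
          rintro (⟨h1, h2⟩ | ⟨h1, h2⟩) <;> simp_all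
      case h1 =>
        intro j hj hjb
        rw [Finset.mem_Ioi] at hj
        rw [coeff_add, coeff_XX, coeff_XX, if_neg ?c1, if_neg ?c2, add_zero]
        case c1 =>
          rw [pair_eq_pair_iff (by simp) (by simp)]
          rintro (⟨h1, h2⟩ | ⟨h1, h2⟩) <;> simp_all
        case c2 =>
          rw [pair_eq_pair_iff (by simp) (by simp)]
          rintro (⟨h1, h2⟩ | ⟨h1, h2⟩) <;> simp_all
      case h2 =>
        intro hb
        exact absurd (Finset.mem_Ioi.mpr hab) hb
    · rw [if_neg hia]
      refine Finset.sum_eq_zero fun j hj => ?_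
      rw [Finset.mem_Ioi] at hj
      rw [coeff_add, coeff_XX, coeff_XX, if_neg ?c1, if_neg ?c2, add_zero]
      case c1 =>
        rw [pair_eq_pair_iff (by simp) (by simp)]
        rintro (⟨h1, h2⟩ | ⟨h1, h2⟩) <;> simp_all
      case c2 =>
        rw [pair_eq_pair_iff (by simp) (by simp)]
        rintro (⟨h1, h2⟩ | ⟨h1, h2⟩) <;> simp_all
        exact absurd (hj.trans hab) (lt_irrefl _)
  rw [Finset.sum_congr rfl fun i _ => step i]
  simp

end coeffs

lemma coeff_mapDomain_eq {n : ℕ} {Q : MvPolynomial (Fin n × Bool) ℤ}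
    (hQ : ∀ σ : Equiv.Perm (Fin n), phi σ Q = Q) (σ : Equiv.Perm (Fin n))
    (e : (Fin n × Bool) →₀ ℕ) :
    coeff (Finsupp.mapDomain (signedVar σ) e) Q = coeff e Q := by
  conv_lhs => rw [← hQ σ]
  exact coeff_rename_mapDomain _ (signedVar_injective σ) Q e

/-- Fix `n ≥ 4`.  A homogeneous polynomial `P ∈ R` of degree `2` satisfies
`φ_σ(P) = P` for all `σ ∈ Sₙ` if and only if `P` is a `ℤ`-linear combination of
`s₁ = Σᵢ ((aᵢ⁺)² + (aᵢ⁻)²)`, `s₂ = Σᵢ aᵢ⁺aᵢ⁻`,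
`s₃ = Σ_{i<j} (aᵢ⁺aⱼ⁺ + aᵢ⁻aⱼ⁻)` and `s₄ = Σ_{i<j} (aᵢ⁺aⱼ⁻ + aᵢ⁻aⱼ⁺)`. -/
theorem stmt4 (n : ℕ) (hn : 4 ≤ n) (P : MvPolynomial (Fin n × Bool) ℤ)
    (hP : P.IsHomogeneous 2) :
    (∀ σ : Equiv.Perm (Fin n), phi σ P = P) ↔
      ∃ c₁ c₂ c₃ c₄ : ℤ,
        P = c₁ • (∑ i : Fin n, (X (i, true) ^ 2 + X (i, false) ^ 2))
          + c₂ • (∑ i : Fin n, X (i, true) * X (i, false))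
          + c₃ • (∑ i : Fin n, ∑ j ∈ Finset.Ioi i,
              (X (i, true) * X (j, true) + X (i, false) * X (j, false)))
          + c₄ • (∑ i : Fin n, ∑ j ∈ Finset.Ioi i,
              (X (i, true) * X (j, false) + X (i, false) * X (j, true))) := by
  classical
  have hmne : ((-1 : ℤˣ)) ≠ 1 := by decide
  set a : Fin n := ⟨0, by omega⟩ with ha
  set b : Fin n := ⟨1, by omega⟩ with hb
  have hab : a < b := by rw [ha, hb]; exact Fin.mk_lt_mk.mpr (by omega)
  constructor
  · intro h
    refine ⟨coeff (Finsupp.single ((a, true) : Fin n × Bool) 2) P,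
      coeff (Finsupp.single ((a, true) : Fin n × Bool) 1
        + Finsupp.single ((a, false) : Fin n × Bool) 1) P,
      coeff (Finsupp.single ((a, true) : Fin n × Bool) 1
        + Finsupp.single ((b, true) : Fin n × Bool) 1) P,
      coeff (Finsupp.single ((a, true) : Fin n × Bool) 1
        + Finsupp.single ((b, false) : Fin n × Bool) 1) P, ?_⟩
    set c1 := coeff (Finsupp.single ((a, true) : Fin n × Bool) 2) P with hc1
    set c2 := coeff (Finsupp.single ((a, true) : Fin n × Bool) 1
        + Finsupp.single ((a, false) : Fin n × Bool) 1) P with hc2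
    set c3 := coeff (Finsupp.single ((a, true) : Fin n × Bool) 1
        + Finsupp.single ((b, true) : Fin n × Bool) 1) P with hc3
    set c4 := coeff (Finsupp.single ((a, true) : Fin n × Bool) 1
        + Finsupp.single ((b, false) : Fin n × Bool) 1) P with hc4
    show P = c1 • S1 n + c2 • S2 n + c3 • S3 n + c4 • S4 n
    rw [← sub_eq_zero]
    set Q : MvPolynomial (Fin n × Bool) ℤ :=
      P - (c1 • S1 n + c2 • S2 n + c3 • S3 n + c4 • S4 n) with hQdef
    have hsm : ∀ (c : ℤ) (S : MvPolynomial (Fin n × Bool) ℤ), S.IsHomogeneous 2 →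
        (c • S).IsHomogeneous 2 := fun c S hS =>
      (homogeneousSubmodule (Fin n × Bool) ℤ 2).smul_mem c hS
    have hQhom : Q.IsHomogeneous 2 := by
      rw [hQdef]
      exact hP.sub ((((hsm c1 _ (S1_hom n)).add (hsm c2 _ (S2_hom n))).add
        (hsm c3 _ (S3_hom n))).add (hsm c4 _ (S4_hom n)))
    have hQinv : ∀ σ : Equiv.Perm (Fin n), phi σ Q = Q := by
      intro σ
      rw [hQdef, map_sub, h σ, map_add, map_add, map_add, map_smul, map_smul, map_smul,
        map_smul, phi_S1, phi_S2, phi_S3, phi_S4]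
    have hb1 : coeff (Finsupp.single ((a, true) : Fin n × Bool) 2) Q = 0 := by
      rw [hQdef]
      simp only [coeff_sub, coeff_add, coeff_smul, smul_eq_mul, cS1E1 a, cS2E1 a, cS3E1 a,
        cS4E1 a, mul_one, mul_zero, add_zero, zero_add, ← hc1, sub_self]
    have hb2 : coeff (Finsupp.single ((a, true) : Fin n × Bool) 1
        + Finsupp.single ((a, false) : Fin n × Bool) 1) Q = 0 := by
      rw [hQdef]
      simp only [coeff_sub, coeff_add, coeff_smul, smul_eq_mul, cS1E2 a, cS2E2 a, cS3E2 a,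
        cS4E2 a, mul_one, mul_zero, add_zero, zero_add, ← hc2, sub_self]
    have hb3 : coeff (Finsupp.single ((a, true) : Fin n × Bool) 1
        + Finsupp.single ((b, true) : Fin n × Bool) 1) Q = 0 := by
      rw [hQdef]
      simp only [coeff_sub, coeff_add, coeff_smul, smul_eq_mul, cS1E3 a b hab, cS2E3 a b hab,
        cS3E3 a b hab, cS4E3 a b hab, mul_one, mul_zero, add_zero, zero_add, ← hc3, sub_self]
    have hb4 : coeff (Finsupp.single ((a, true) : Fin n × Bool) 1
        + Finsupp.single ((b, false) : Fin n × Bool) 1) Q = 0 := by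
      rw [hQdef]
      simp only [coeff_sub, coeff_add, coeff_smul, smul_eq_mul, cS1E4 a b hab, cS2E4 a b hab,
        cS3E4 a b hab, cS4E4 a b hab, mul_one, mul_zero, add_zero, zero_add, ← hc4, sub_self]
    refine MvPolynomial.ext _ _ fun d => ?_
    rw [coeff_zero]
    by_cases hdeg : d.degree = 2
    · obtain ⟨u, v, rfl⟩ := exists_pair_of_deg_two d hdeg
      obtain ⟨i, x⟩ := u
      obtain ⟨j, y⟩ := v
      by_cases hij : i = j
      · subst hij
        by_cases hxy : x = y
        · subst hxy
          have hd2 : Finsupp.single ((i, x) : Fin n × Bool) 1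
              + Finsupp.single ((i, x) : Fin n × Bool) 1
              = Finsupp.single ((i, x) : Fin n × Bool) 2 := by
            rw [← Finsupp.single_add]
          rw [hd2]
          cases x
          · obtain ⟨σ, hσa, hσs⟩ := exists_perm_one hn a i (-1)
            have key := coeff_mapDomain_eq hQinv σ (Finsupp.single ((a, true) : Fin n × Bool) 2)
            rw [Finsupp.mapDomain_single, signedVar_apply, hσa, hσs, if_neg hmne,
              show (!true) = false from rfl] at key
            rw [key]
            exact hb1
          · obtain ⟨σ, hσa, hσs⟩ := exists_perm_one hn a i 1
            have key := coeff_mapDomain_eq hQinv σ (Finsupp.single ((a, true) : Fin n × Bool) 2)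
            rw [Finsupp.mapDomain_single, signedVar_apply, hσa, hσs, if_pos rfl] at key
            rw [key]
            exact hb1
        · obtain ⟨σ, hσa, hσs⟩ := exists_perm_one hn a i 1
          have key := coeff_mapDomain_eq hQinv σ
            (Finsupp.single ((a, true) : Fin n × Bool) 1
              + Finsupp.single ((a, false) : Fin n × Bool) 1)
          rw [Finsupp.mapDomain_add, Finsupp.mapDomain_single, Finsupp.mapDomain_single,
            signedVar_apply, signedVar_apply, hσa, hσs, if_pos rfl, if_pos rfl] at key
          cases x <;> cases y
          · exact absurd rfl hxy
          · rw [add_comm, key]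
            exact hb2
          · rw [key]
            exact hb2
          · exact absurd rfl hxy
      · cases x <;> cases y
        · -- (false, false) : E3 with sign -1
          obtain ⟨σ, hσa, hσb, hσs⟩ := exists_perm_two hn hab.ne hij (-1)
          have key := coeff_mapDomain_eq hQinv σ
            (Finsupp.single ((a, true) : Fin n × Bool) 1
              + Finsupp.single ((b, true) : Fin n × Bool) 1)
          rw [Finsupp.mapDomain_add, Finsupp.mapDomain_single, Finsupp.mapDomain_single,
            signedVar_apply, signedVar_apply, hσa, hσb, hσs, if_neg hmne] at key
          rw [show (!true) = false from rfl] at key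
          rw [key]
          exact hb3
        · -- (false, true) : E4 with sign -1
          obtain ⟨σ, hσa, hσb, hσs⟩ := exists_perm_two hn hab.ne hij (-1)
          have key := coeff_mapDomain_eq hQinv σ
            (Finsupp.single ((a, true) : Fin n × Bool) 1
              + Finsupp.single ((b, false) : Fin n × Bool) 1)
          rw [Finsupp.mapDomain_add, Finsupp.mapDomain_single, Finsupp.mapDomain_single,
            signedVar_apply, signedVar_apply, hσa, hσb, hσs, if_neg hmne, if_neg hmne,
            show (!true) = false from rfl, show (!false) = true from rfl] at key
          rw [key]
          exact hb4
        · -- (true, false) : E4 with sign 1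
          obtain ⟨σ, hσa, hσb, hσs⟩ := exists_perm_two hn hab.ne hij 1
          have key := coeff_mapDomain_eq hQinv σ
            (Finsupp.single ((a, true) : Fin n × Bool) 1
              + Finsupp.single ((b, false) : Fin n × Bool) 1)
          rw [Finsupp.mapDomain_add, Finsupp.mapDomain_single, Finsupp.mapDomain_single,
            signedVar_apply, signedVar_apply, hσa, hσb, hσs, if_pos rfl, if_pos rfl] at key
          rw [key]
          exact hb4
        · -- (true, true) : E3 with sign 1
          obtain ⟨σ, hσa, hσb, hσs⟩ := exists_perm_two hn hab.ne hij 1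
          have key := coeff_mapDomain_eq hQinv σ
            (Finsupp.single ((a, true) : Fin n × Bool) 1
              + Finsupp.single ((b, true) : Fin n × Bool) 1)
          rw [Finsupp.mapDomain_add, Finsupp.mapDomain_single, Finsupp.mapDomain_single,
            signedVar_apply, signedVar_apply, hσa, hσb, hσs, if_pos rfl] at key
          rw [key]
          exact hb3
    · exact hQhom.coeff_eq_zero hdeg
  · rintro ⟨c1, c2, c3, c4, rfl⟩ σ
    show phi σ (c1 • S1 n + c2 • S2 n + c3 • S3 n + c4 • S4 n)
      = c1 • S1 n + c2 • S2 n + c3 • S3 n + c4 • S4 n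
    rw [map_add, map_add, map_add, map_smul, map_smul, map_smul, map_smul,
      phi_S1, phi_S2, phi_S3, phi_S4]
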